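/- Let $p$ be a prime, $s_0 \in \mathbb{F}_p$, and $X, Y \ge 1$ real numbers. The number of pairs $(x, y)$ of positive integers with $x \le X$, $y \le Y$, $\gcd(x, y) = 1$, and $x \equiv s_0 y \pmod p$ is $O(1 + XY/p)$, with an absolute implied constant. -/

import Mathlib

open Finset

theorem stmt_6 :
    ∃ C : ℝ, 0 < C ∧ ∀ (p : ℕ), p.Prime → ∀ (s₀ : ZMod p) (X Y : ℝ), 1 ≤ X → 1 ≤ Y →
      ((((Finset.Icc 1 ⌊X⌋₊) ×ˢ (Finset.Icc 1 ⌊Y⌋₊)).filter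
          (fun q : ℕ × ℕ => Nat.gcd q.1 q.2 = 1 ∧ (q.1 : ZMod p) = s₀ * (q.2 : ZMod p))).card : ℝ)
        ≤ C * (1 + X * Y / p) := by
  refine ⟨2, by norm_num, ?_⟩
  intro p hp s₀ X Y hX hY
  have hp0 : 0 < p := hp.pos
  have hX0 : (0:ℝ) ≤ X := by linarith
  have hY0 : (0:ℝ) ≤ Y := by linarith
  have hPpos : (0:ℝ) < (p:ℝ) := by exact_mod_cast hp0
  set S := (((Finset.Icc 1 ⌊X⌋₊) ×ˢ (Finset.Icc 1 ⌊Y⌋₊)).filter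
      (fun q : ℕ × ℕ => Nat.gcd q.1 q.2 = 1 ∧ (q.1 : ZMod p) = s₀ * (q.2 : ZMod p))) with hSdef
  have hmem : ∀ q ∈ S, 1 ≤ q.1 ∧ q.1 ≤ ⌊X⌋₊ ∧ 1 ≤ q.2 ∧ q.2 ≤ ⌊Y⌋₊ ∧
      Nat.gcd q.1 q.2 = 1 ∧ ((q.1 : ZMod p) = s₀ * q.2) := by
    intro q hq
    rw [hSdef, Finset.mem_filter, Finset.mem_product, Finset.mem_Icc, Finset.mem_Icc] at hq
    tauto
  have key : (0:ℝ) ≤ 1 + X * Y / p := by positivity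
  rcases S.eq_empty_or_nonempty with hS | hS
  · rw [hS]; simp; linarith
  obtain ⟨q₁, hq₁S, hmin⟩ := S.exists_min_image (fun q => (q.1:ℚ)/q.2) hS
  obtain ⟨hx₁1, hx₁X, hy₁1, hy₁Y, hcop₁, hcong₁⟩ := hmem q₁ hq₁S
  have hy₁0 : (0:ℚ) < (q₁.2:ℚ) := by exact_mod_cast hy₁1
  -- cross multiplication inequality from minimality
  have hcross : ∀ q ∈ S, q₁.1 * q.2 ≤ q.1 * q₁.2 := by
    intro q hq
    obtain ⟨hx1, _, hy1, _, _, _⟩ := hmem q hq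
    have h := hmin q hq
    have hy0 : (0:ℚ) < (q.2:ℚ) := by exact_mod_cast hy1
    rw [div_le_div_iff₀ hy₁0 hy0] at h
    exact_mod_cast h
  -- p divides the cross difference
  have hdvd : ∀ q ∈ S, (p:ℤ) ∣ ((q.1:ℤ) * q₁.2 - q₁.1 * q.2) := by
    intro q hq
    obtain ⟨_, _, _, _, _, hc⟩ := hmem q hq
    have : (((q.1:ℤ) * q₁.2 - q₁.1 * q.2 : ℤ) : ZMod p) = 0 := by
      push_cast
      rw [hc, hcong₁]; ring
    exact (ZMod.intCast_zmod_eq_zero_iff_dvd _ p).mp this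
  have hdvdN : ∀ q ∈ S, p ∣ (q.1 * q₁.2 - q₁.1 * q.2) := by
    intro q hq
    have h1 := hdvd q hq
    have h2 := hcross q hq
    have : ((q.1 * q₁.2 - q₁.1 * q.2 : ℕ) : ℤ) = (q.1:ℤ) * q₁.2 - q₁.1 * q.2 := by
      push_cast [h2]; ring
    exact_mod_cast this ▸ h1
  -- split S
  set S0 := S.filter (fun q => q.1 * q₁.2 = q₁.1 * q.2) with hS0
  set S1 := S.filter (fun q => ¬ q.1 * q₁.2 = q₁.1 * q.2) with hS1
  have hsplit : S0.card + S1.card = S.card := Finset.card_filter_add_card_filter_not _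
  -- S0 has at most one element
  have hS0card : S0.card ≤ 1 := by
    refine Finset.card_le_one.mpr ?_
    intro a ha b hb
    have key1 : ∀ q ∈ S0, q = q₁ := by
      intro q hq
      rw [hS0, Finset.mem_filter] at hq
      obtain ⟨hqS, heq⟩ := hq
      obtain ⟨hx1, _, hy1, _, hcop, _⟩ := hmem q hqS
      have d1 : q.1 ∣ q₁.1 := by
        have h' : q.1 ∣ q₁.1 * q.2 := ⟨q₁.2, heq.symm⟩
        exact (Nat.Coprime.dvd_of_dvd_mul_right hcop h')
      have d2 : q₁.1 ∣ q.1 := by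
        have h' : q₁.1 ∣ q.1 * q₁.2 := ⟨q.2, heq⟩
        exact (Nat.Coprime.dvd_of_dvd_mul_right hcop₁ h')
      have hx : q.1 = q₁.1 := Nat.dvd_antisymm d1 d2
      have hy : q.2 = q₁.2 := by
        have : q₁.1 * q₁.2 = q₁.1 * q.2 := by rw [← heq, hx]
        exact (Nat.eq_of_mul_eq_mul_left (by omega) this).symm
      exact Prod.ext hx hy
    rw [key1 a ha, key1 b hb]
  -- inject S1 into a product
  set M := ⌊X⌋₊ * q₁.2 / p with hM
  have hS1card : S1.card ≤ M * (⌊Y⌋₊ / q₁.2 + 1) := by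
    have := Finset.card_le_card_of_injOn
      (f := fun q : ℕ × ℕ => ((q.1 * q₁.2 - q₁.1 * q.2) / p, q.2 / q₁.2))
      (s := S1) (t := (Finset.Icc 1 M) ×ˢ (Finset.Icc 0 (⌊Y⌋₊ / q₁.2)))
      ?_ ?_
    · simpa [Nat.card_Icc, mul_comm] using this
    · -- maps to
      intro q hq
      rw [hS1, Finset.mem_coe, Finset.mem_filter] at hq
      obtain ⟨hqS, hne⟩ := hq
      obtain ⟨hx1, hxX, hy1, hyY, _, _⟩ := hmem q hqS
      have hle := hcross q hqS
      have hdv := hdvdN q hqS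
      have hlt : q₁.1 * q.2 < q.1 * q₁.2 := lt_of_le_of_ne hle (fun h => hne h.symm)
      have hple : p ≤ q.1 * q₁.2 - q₁.1 * q.2 := Nat.le_of_dvd (by omega) hdv
      simp only [Finset.mem_coe, Finset.mem_product, Finset.mem_Icc]
      refine ⟨⟨?_, ?_⟩, Nat.zero_le _, Nat.div_le_div_right hyY⟩
      · exact (Nat.one_le_div_iff hp0).mpr hple
      · refine Nat.div_le_div_right ?_
        calc q.1 * q₁.2 - q₁.1 * q.2 ≤ q.1 * q₁.2 := Nat.sub_le _ _
          _ ≤ ⌊X⌋₊ * q₁.2 := Nat.mul_le_mul_right _ hxX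
    · -- injective
      intro q hq q' hq' hf
      rw [Finset.mem_coe, Finset.mem_filter] at hq hq'
      obtain ⟨hqS, _⟩ := hq
      obtain ⟨hq'S, _⟩ := hq'
      have hle := hcross q hqS
      have hle' := hcross q' hq'S
      have hdv := hdvdN q hqS
      have hdv' := hdvdN q' hq'S
      simp only [Prod.mk.injEq] at hf
      obtain ⟨hk, ht⟩ := hf
      have hd : q.1 * q₁.2 - q₁.1 * q.2 = q'.1 * q₁.2 - q₁.1 * q'.2 := by
        rw [← Nat.div_mul_cancel hdv, ← Nat.div_mul_cancel hdv', hk]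
      have hdz : (q.1:ℤ) * q₁.2 - q₁.1 * q.2 = (q'.1:ℤ) * q₁.2 - q₁.1 * q'.2 := by
        have e1 : ((q.1 * q₁.2 - q₁.1 * q.2 : ℕ) : ℤ) = (q.1:ℤ) * q₁.2 - q₁.1 * q.2 := by
          push_cast [hle]; ring
        have e2 : ((q'.1 * q₁.2 - q₁.1 * q'.2 : ℕ) : ℤ) = (q'.1:ℤ) * q₁.2 - q₁.1 * q'.2 := by
          push_cast [hle']; ring
        rw [← e1, ← e2, hd]
      have hydvd : (q₁.2:ℤ) ∣ ((q.2:ℤ) - q'.2) := by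
        have hco : IsCoprime (q₁.2:ℤ) (q₁.1:ℤ) :=
          (Nat.isCoprime_iff_coprime.mpr (Nat.coprime_comm.mp hcop₁))
        have : (q₁.2:ℤ) ∣ (q₁.1:ℤ) * ((q.2:ℤ) - q'.2) := by
          have : (q₁.1:ℤ) * ((q.2:ℤ) - q'.2) = ((q.1:ℤ) - q'.1) * q₁.2 := by linarith [hdz]
          rw [this]; exact dvd_mul_left _ _
        exact hco.dvd_of_dvd_mul_left this
      have hmodeq : q'.2 ≡ q.2 [MOD q₁.2] := (Nat.modEq_iff_dvd).mpr hydvd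
      have hyeq : q.2 = q'.2 := by
        have hm : q.2 % q₁.2 = q'.2 % q₁.2 := hmodeq.symm
        rw [← Nat.div_add_mod q.2 q₁.2, ← Nat.div_add_mod q'.2 q₁.2, ht, hm]
      have hxeq : q.1 = q'.1 := by
        have : (q.1:ℤ) * q₁.2 = (q'.1:ℤ) * q₁.2 := by rw [hyeq] at hdz; linarith
        have hy₁z : (q₁.2:ℤ) ≠ 0 := by exact_mod_cast Nat.one_le_iff_ne_zero.mp hy₁1
        exact_mod_cast mul_right_cancel₀ hy₁z this
      exact Prod.ext hxeq hyeq
  -- total nat bound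
  have htot : S.card ≤ 1 + M * (⌊Y⌋₊ / q₁.2 + 1) := by omega
  -- real estimates
  have hMr : (M:ℝ) ≤ X * q₁.2 / p := by
    calc (M:ℝ) ≤ ((⌊X⌋₊ * q₁.2 : ℕ):ℝ) / p := Nat.cast_div_le
      _ ≤ X * q₁.2 / p := by
        push_cast
        gcongr
        exact Nat.floor_le hX0
  have hQr : ((⌊Y⌋₊ / q₁.2 : ℕ):ℝ) ≤ Y / q₁.2 := by
    calc ((⌊Y⌋₊ / q₁.2 : ℕ):ℝ) ≤ (⌊Y⌋₊:ℝ) / q₁.2 := Nat.cast_div_le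
      _ ≤ Y / q₁.2 := by
        gcongr
        exact Nat.floor_le hY0
  have hy₁r : (1:ℝ) ≤ (q₁.2:ℝ) := by exact_mod_cast hy₁1
  have hy₁Yr : (q₁.2:ℝ) ≤ Y := by
    calc (q₁.2:ℝ) ≤ (⌊Y⌋₊:ℝ) := by exact_mod_cast hy₁Y
      _ ≤ Y := Nat.floor_le hY0
  have final : (S.card:ℝ) ≤ 1 + (M:ℝ) * (((⌊Y⌋₊ / q₁.2 : ℕ):ℝ) + 1) := by
    exact_mod_cast Nat.cast_le.mpr htot |>.trans_eq (by push_cast; ring)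
  have step : (M:ℝ) * (((⌊Y⌋₊ / q₁.2 : ℕ):ℝ) + 1) ≤ (X * q₁.2 / p) * (Y / q₁.2 + 1) := by
    apply mul_le_mul hMr (by linarith) (by positivity) (by positivity)
  have expand : (X * q₁.2 / p) * (Y / q₁.2 + 1) ≤ 2 * (X * Y / p) := by
    have h1 : (X * q₁.2 / p) * (Y / q₁.2) = X * Y / p := by
      field_simp
    have h2 : (X * q₁.2 / p) * 1 ≤ X * Y / p := by
      rw [mul_one]
      gcongr
    calc (X * q₁.2 / p) * (Y / q₁.2 + 1) = (X * q₁.2 / p) * (Y / q₁.2) + (X * q₁.2 / p) * 1 := by ring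
      _ ≤ X * Y / p + X * Y / p := by rw [h1]; linarith
      _ = 2 * (X * Y / p) := by ring
  calc (S.card:ℝ) ≤ 1 + (M:ℝ) * (((⌊Y⌋₊ / q₁.2 : ℕ):ℝ) + 1) := final
    _ ≤ 1 + 2 * (X * Y / p) := by linarith [step.trans expand]
    _ ≤ 2 * (1 + X * Y / p) := by linarith [div_nonneg (mul_nonneg hX0 hY0) hPpos.le]
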